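/- In the rooted capacity model, for every integer i ≥ 0: 2 · #{u ∈ V : L(u) ≤ i and d(u) < d̄_u} ≥ 1 + 2·Z_{i−1} − Z_i, where Z_{−1} = 0. -/

import Mathlib

namespace P2P

/-- A walk of length `n` from `r` to `u` in the edge set `E`. -/
def Walk {α : Type*} (E : Finset (α × α)) (r u : α) (n : ℕ) : Prop :=
  ∃ f : ℕ → α, f 0 = r ∧ f n = u ∧ ∀ k < n, (f k, f (k + 1)) ∈ E

/-- Depth of `u` below root `r`: minimal number of edges of a directed walk
(equivalently, of a directed path) from `r` to `u`; `⊤` if unreachable. -/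
noncomputable def depth {α : Type*} (E : Finset (α × α)) (r u : α) : ℕ∞ :=
  sInf {n : ℕ∞ | ∃ m : ℕ, n = (m : ℕ∞) ∧ Walk E r u m}

/-- Out-degree of `u` in `E`. -/
def outDeg {α : Type*} [DecidableEq α] (E : Finset (α × α)) (u : α) : ℕ :=
  (E.filter fun e => e.1 = u).card

/-- In-degree of `u` in `E`. -/
def inDeg {α : Type*} [DecidableEq α] (E : Finset (α × α)) (u : α) : ℕ :=
  (E.filter fun e => e.2 = u).card

lemma natCard_eq {α : Type*} [Fintype α] (p : α → Prop) [DecidablePred p] :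
    Nat.card {u : α // p u} = (Finset.univ.filter p).card := by
  simp [Nat.card_eq_fintype_card, Fintype.card_subtype]

lemma depth_le_of_walk {α : Type*} {E : Finset (α × α)} {r u : α} {m n : ℕ}
    (h : Walk E r u m) (hmn : m ≤ n) : depth E r u ≤ (n : ℕ∞) :=
  le_trans (sInf_le ⟨m, rfl, h⟩) (by exact_mod_cast hmn)

lemma exists_walk_of_depth_le {α : Type*} {E : Finset (α × α)} {r u : α} {n : ℕ}
    (h : depth E r u ≤ (n : ℕ∞)) : ∃ m ≤ n, Walk E r u m := by
  by_contra hc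
  push_neg at hc
  have h2 : ((n + 1 : ℕ) : ℕ∞) ≤ depth E r u := by
    apply le_sInf
    rintro x ⟨m, rfl, hw⟩
    have hm : ¬ m ≤ n := fun hle => hc m hle hw
    exact_mod_cast (by omega : n + 1 ≤ m)
  have := h2.trans h
  have : n + 1 ≤ n := by exact_mod_cast this
  omega

lemma walk_extend {α : Type*} {E : Finset (α × α)} {r a b : α} {m : ℕ}
    (h : Walk E r a m) (he : (a, b) ∈ E) : Walk E r b (m + 1) := by
  obtain ⟨f, h0, hm, hedge⟩ := h
  refine ⟨fun k => if k ≤ m then f k else b, by simp [h0], by simp, ?_⟩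
  intro k hk
  by_cases hkm : k < m
  · simpa [Nat.le_of_lt hkm, Nat.succ_le_of_lt hkm] using hedge k hkm
  · have hk' : k = m := by omega
    subst hk'
    simp [hm, he]

lemma depth_root {α : Type*} (E : Finset (α × α)) (r : α) : depth E r r ≤ (0 : ℕ∞) := by
  have : Walk E r r 0 := ⟨fun _ => r, rfl, rfl, fun k hk => absurd hk (by omega)⟩
  exact_mod_cast depth_le_of_walk this le_rfl

/-- in the rooted capacity model (at most one incoming edge per
node, none at the root, degree caps `d̄_u ≥ 2`), for every `i ≥ 0`,
`2·#{u : L(u) ≤ i, d(u) < d̄_u} ≥ 1 + 2·Z_{i−1} − Z_i`, where `Z_{−1} = 0`. -/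
theorem available_nodes_lower_bound
    {α : Type*} [Fintype α] [DecidableEq α]
    (r : α) (E : Finset (α × α))
    (hdist : ∀ e ∈ E, e.1 ≠ e.2)
    (hone : ∀ w : α, inDeg E w ≤ 1)
    (hrootin : inDeg E r = 0)
    (dbar : α → ℕ) (hdbar : ∀ u : α, 2 ≤ dbar u)
    (i : ℕ) :
    (1 : ℤ) +
        2 * (if i = 0 then 0 else
          (Nat.card {u : α // depth E r u ≤ ((i - 1 : ℕ) : ℕ∞)} : ℤ)) -
        (Nat.card {u : α // depth E r u ≤ (i : ℕ∞)} : ℤ) ≤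
      2 * (Nat.card {u : α // depth E r u ≤ (i : ℕ∞) ∧ outDeg E u < dbar u} : ℤ) := by
  classical
  set A1 : Finset α := Finset.univ.filter (fun u => depth E r u ≤ ((i - 1 : ℕ) : ℕ∞)) with hA1
  set A : Finset α := Finset.univ.filter (fun u => depth E r u ≤ (i : ℕ∞)) with hA
  set S : Finset α :=
    Finset.univ.filter (fun u => depth E r u ≤ (i : ℕ∞) ∧ outDeg E u < dbar u) with hS
  rw [natCard_eq, natCard_eq, natCard_eq, ← hA1, ← hA, ← hS]
  have hrA : r ∈ A := by
    simp only [hA, Finset.mem_filter, Finset.mem_univ, true_and]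
    exact le_trans (depth_root E r) zero_le
  by_cases hi : i = 0
  · have h1 : 1 ≤ A.card := Finset.card_pos.mpr ⟨r, hrA⟩
    simp only [if_pos hi]
    omega
  · simp only [if_neg hi]
    set T : Finset (α × α) :=
      E.filter (fun e => depth E r e.1 ≤ ((i - 1 : ℕ) : ℕ∞)) with hT
    -- T.card = sum of out-degrees over A1
    have htail : ∀ e ∈ T, e.1 ∈ A1 := by
      intro e he
      simp only [hT, Finset.mem_filter] at he
      exact Finset.mem_filter.mpr ⟨Finset.mem_univ _, he.2⟩
    have hTsum : T.card = ∑ b ∈ A1, outDeg E b := by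
      rw [Finset.card_eq_sum_card_fiberwise htail]
      refine Finset.sum_congr rfl (fun b hb => ?_)
      simp only [hA1, Finset.mem_filter, Finset.mem_univ, true_and] at hb
      congr 1
      rw [hT, Finset.filter_filter]
      refine Finset.filter_congr (fun e _ => ?_)
      constructor
      · exact fun h => h.2
      · exact fun h => ⟨by rw [h]; exact hb, h⟩
    -- lower bound on the sum
    set C : Finset α := A1.filter (fun u => ¬ outDeg E u < dbar u) with hC
    have hCS : A1.card ≤ S.card + C.card := by
      have hsplit := Finset.card_filter_add_card_filter_not
        (s := A1) (p := fun u => outDeg E u < dbar u)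
      rw [← hC] at hsplit
      have hsub : A1.filter (fun u => outDeg E u < dbar u) ⊆ S := by
        intro u hu
        simp only [hA1, Finset.mem_filter, Finset.mem_univ, true_and] at hu
        have hdi : depth E r u ≤ (i : ℕ∞) :=
          le_trans hu.1 (by exact_mod_cast (Nat.sub_le i 1))
        exact Finset.mem_filter.mpr ⟨Finset.mem_univ _, hdi, hu.2⟩
      have := Finset.card_le_card hsub
      omega
    have hsumC : 2 * C.card ≤ ∑ b ∈ A1, outDeg E b := by
      calc 2 * C.card = ∑ _b ∈ C, 2 := by
            rw [Finset.sum_const, smul_eq_mul, mul_comm]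
        _ ≤ ∑ b ∈ C, outDeg E b := by
            refine Finset.sum_le_sum (fun b hb => ?_)
            simp only [hC, Finset.mem_filter] at hb
            exact le_trans (hdbar b) (by omega)
        _ ≤ ∑ b ∈ A1, outDeg E b :=
            Finset.sum_le_sum_of_subset (Finset.filter_subset _ _)
    -- upper bound: heads of edges in T are distinct, lie in A, and differ from r
    have hinj : Set.InjOn Prod.snd (T : Set (α × α)) := by
      intro e1 h1 e2 h2 hsnd
      have h1' : e1 ∈ E.filter (fun e => e.2 = e1.2) :=
        Finset.mem_filter.mpr ⟨(Finset.filter_subset _ _) h1, rfl⟩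
      have h2' : e2 ∈ E.filter (fun e => e.2 = e1.2) :=
        Finset.mem_filter.mpr ⟨(Finset.filter_subset _ _) h2, hsnd.symm⟩
      exact Finset.card_le_one.mp (hone e1.2) e1 h1' e2 h2'
    have hhead : ∀ e ∈ T, e.2 ∈ A := by
      intro e he
      simp only [hT, Finset.mem_filter] at he
      obtain ⟨m, hm, hw⟩ := exists_walk_of_depth_le he.2
      have hw' : Walk E r e.2 (m + 1) := walk_extend hw he.1
      simp only [hA, Finset.mem_filter, Finset.mem_univ, true_and]
      exact depth_le_of_walk hw' (by omega)
    have hrnot : r ∉ T.image Prod.snd := by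
      intro hr
      obtain ⟨e, he, he2⟩ := Finset.mem_image.mp hr
      have : e ∈ E.filter (fun e => e.2 = r) :=
        Finset.mem_filter.mpr ⟨(Finset.filter_subset _ _) he, he2⟩
      have := Finset.card_pos.mpr ⟨e, this⟩
      rw [show (E.filter fun e => e.2 = r).card = inDeg E r from rfl, hrootin] at this
      omega
    have hTA : T.card + 1 ≤ A.card := by
      have hins : insert r (T.image Prod.snd) ⊆ A := by
        intro u hu
        rcases Finset.mem_insert.mp hu with h | h
        · exact h ▸ hrA
        · obtain ⟨e, he, he2⟩ := Finset.mem_image.mp h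
          exact he2 ▸ hhead e he
      have h1 := Finset.card_le_card hins
      rw [Finset.card_insert_of_notMem hrnot, Finset.card_image_of_injOn hinj] at h1
      omega
    rw [← hTsum] at hsumC
    omega
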